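/- Let H be a finite-dimensional complex Hilbert space, A a Hermitian operator on H, and P = x⊗x a rank-one projection for a unit vector x. Then lim_{t→+∞} tr(exp(A + t(P − I))) = exp(⟨Ax, x⟩). -/

import Mathlib

open Matrix Filter
open scoped ComplexOrder

/-- Functional calculus for Hermitian matrices: apply `f` to the eigenvalues. -/
noncomputable def mfun {d : ℕ} (f : ℝ → ℝ) (A : Matrix (Fin d) (Fin d) ℂ) :
    Matrix (Fin d) (Fin d) ℂ :=
  if hA : A.IsHermitian then
    (hA.eigenvectorUnitary : Matrix (Fin d) (Fin d) ℂ) *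
      Matrix.diagonal (fun i => (f (hA.eigenvalues i) : ℂ)) *
      star (hA.eigenvectorUnitary : Matrix (Fin d) (Fin d) ℂ)
  else 0

noncomputable def mexp {d : ℕ} (A : Matrix (Fin d) (Fin d) ℂ) : Matrix (Fin d) (Fin d) ℂ :=
  mfun Real.exp A

noncomputable def mlog {d : ℕ} (A : Matrix (Fin d) (Fin d) ℂ) : Matrix (Fin d) (Fin d) ℂ :=
  mfun Real.log A

/-- The Löwner order: `A ≤ B` iff `B - A` is positive semidefinite. -/
def loewnerLE {d : ℕ} (A B : Matrix (Fin d) (Fin d) ℂ) : Prop :=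
  (B - A).PosSemidef

/-- The quadratic form ⟨Ax, x⟩. -/
noncomputable def qf {d : ℕ} (A : Matrix (Fin d) (Fin d) ℂ) (x : Fin d → ℂ) : ℂ :=
  star x ⬝ᵥ A.mulVec x

/-- The rank-one projection x ⊗ x. -/
noncomputable def rankOneProj {d : ℕ} (x : Fin d → ℂ) : Matrix (Fin d) (Fin d) ℂ :=
  Matrix.vecMulVec x (star x)

lemma trace_mexp {d : ℕ} {M : Matrix (Fin d) (Fin d) ℂ} (hM : M.IsHermitian) :
    (mexp M).trace = ∑ i, (Real.exp (hM.eigenvalues i) : ℂ) := by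
  rw [mexp, mfun, dif_pos hM, Matrix.trace_mul_cycle]
  rw [show star (hM.eigenvectorUnitary : Matrix (Fin d) (Fin d) ℂ) *
      (hM.eigenvectorUnitary : Matrix (Fin d) (Fin d) ℂ) = 1 from
    Matrix.mem_unitaryGroup_iff'.mp hM.eigenvectorUnitary.2, one_mul, Matrix.trace_diagonal]

lemma herm_M {d : ℕ} {A : Matrix (Fin d) (Fin d) ℂ} (hA : A.IsHermitian) (x : Fin d → ℂ)
    (t : ℝ) : (A + (t : ℂ) • (rankOneProj x - 1)).IsHermitian := by
  apply hA.add
  have hP : ((rankOneProj x - 1 : Matrix (Fin d) (Fin d) ℂ)).IsHermitian := by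
    apply Matrix.IsHermitian.sub ?_ Matrix.isHermitian_one
    show _ = _
    ext i j
    simp [rankOneProj, Matrix.vecMulVec_apply, Matrix.conjTranspose_apply, mul_comm]
  show _ = _
  rw [Matrix.conjTranspose_smul, hP]
  simp

lemma qf_expand {d : ℕ} (A : Matrix (Fin d) (Fin d) ℂ) (x : Fin d → ℂ) (t : ℝ)
    (u w : Fin d → ℂ) :
    star u ⬝ᵥ (A + (t : ℂ) • (rankOneProj x - 1)) *ᵥ w =
      star u ⬝ᵥ A *ᵥ w + (t : ℂ) * ((star u ⬝ᵥ x) * (star x ⬝ᵥ w) - star u ⬝ᵥ w) := by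
  have hP : (rankOneProj x) *ᵥ w = (star x ⬝ᵥ w) • x := by
    ext j
    simp [rankOneProj, Matrix.vecMulVec_apply, Matrix.mulVec, dotProduct,
      Finset.mul_sum]
    ring_nf
    rw [Finset.mul_sum]
    apply Finset.sum_congr rfl
    intro i _
    ring
  rw [Matrix.add_mulVec, Matrix.smul_mulVec, Matrix.sub_mulVec, hP,
    Matrix.one_mulVec, dotProduct_add, dotProduct_smul]
  rw [dotProduct_sub, dotProduct_smul]
  simp only [smul_eq_mul, Complex.real_smul]
  ring

lemma sum_normSq_eq {d : ℕ} (u : Fin d → ℂ) (r : ℝ) (h : star u ⬝ᵥ u = (r : ℂ)) :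
    ∑ j, Complex.normSq (u j) = r := by
  have : ((∑ j, Complex.normSq (u j) : ℝ) : ℂ) = (r : ℂ) := by
    rw [← h]
    simp [dotProduct, Complex.normSq_eq_conj_mul_self]
  exact_mod_cast this

lemma entry_bound {d : ℕ} (u : Fin d → ℂ) (r : ℝ) (h : star u ⬝ᵥ u = (r : ℂ)) (j : Fin d) :
    ‖u j‖ ≤ Real.sqrt r := by
  rw [Complex.norm_def]
  apply Real.sqrt_le_sqrt
  rw [← sum_normSq_eq u r h]
  exact Finset.single_le_sum (fun i _ => Complex.normSq_nonneg _) (Finset.mem_univ j)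

lemma bound_qf {d : ℕ} (B : Matrix (Fin d) (Fin d) ℂ) (u w : Fin d → ℂ) (cu cw : ℝ)
    (hcu : 0 ≤ cu) (hcw : 0 ≤ cw)
    (hu : ∀ j, ‖u j‖ ≤ cu) (hw : ∀ k, ‖w k‖ ≤ cw) :
    ‖star u ⬝ᵥ B *ᵥ w‖ ≤ (∑ j, ∑ k, ‖B j k‖) * cu * cw := by
  have h1 : star u ⬝ᵥ B *ᵥ w = ∑ j, ∑ k, star (u j) * (B j k * w k) := by
    simp [dotProduct, Matrix.mulVec, Finset.mul_sum]
  rw [h1]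
  calc ‖∑ j, ∑ k, star (u j) * (B j k * w k)‖
      ≤ ∑ j, ∑ k, ‖star (u j) * (B j k * w k)‖ := by
        apply le_trans (norm_sum_le _ _)
        exact Finset.sum_le_sum fun j _ => norm_sum_le _ _
    _ ≤ ∑ j, ∑ k, ‖B j k‖ * cu * cw := by
        apply Finset.sum_le_sum; intro j _
        apply Finset.sum_le_sum; intro k _
        rw [norm_mul, norm_mul,
          show ‖star (u j)‖ = ‖u j‖ from Complex.norm_conj (u j)]
        calc ‖u j‖ * (‖B j k‖ * ‖w k‖)
            ≤ cu * (‖B j k‖ * cw) := by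
              apply mul_le_mul (hu j) ?_ (by positivity) hcu
              exact mul_le_mul le_rfl (hw k) (norm_nonneg _) (norm_nonneg _)
          _ = ‖B j k‖ * cu * cw := by ring
    _ = (∑ j, ∑ k, ‖B j k‖) * cu * cw := by
        simp [Finset.sum_mul]

set_option maxHeartbeats 2000000 in
lemma key {d : ℕ} (hd : 2 ≤ d) (A : Matrix (Fin d) (Fin d) ℂ) (hA : A.IsHermitian)
    (x : Fin d → ℂ) (hx : star x ⬝ᵥ x = 1) (t : ℝ) (ht : 0 < t) :
    qf A x = ((qf A x).re : ℂ) ∧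
    Real.exp ((qf A x).re) ≤ ∑ i, Real.exp ((herm_M hA x t).eigenvalues i) ∧
    ∑ i, Real.exp ((herm_M hA x t).eigenvalues i) ≤
      Real.exp ((qf A x).re + (4 * (∑ j, ∑ k, ‖A j k‖))^2 / (2*t)) *
        (1 + ((d:ℝ) - 1) * Real.exp (-t/2)) := by
  have hdpos : 0 < d := by omega
  set M : Matrix (Fin d) (Fin d) ℂ := A + (t : ℂ) • (rankOneProj x - 1) with hMdef
  set hM : M.IsHermitian := herm_M hA x t
  set μ : Fin d → ℝ := hM.eigenvalues with hμdef
  set b := hM.eigenvectorBasis with hbdef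
  set v : Fin d → (Fin d → ℂ) := fun i => ⇑(b i) with hvdef
  -- eigen equation
  have hMv : ∀ i, M *ᵥ v i = (μ i : ℂ) • v i := by
    intro i
    have h := hM.mulVec_eigenvectorBasis i
    rw [hvdef]
    rw [h]
    ext j
    simp [Complex.real_smul]
    rfl
  -- unit eigenvectors
  have hv1 : ∀ i, star (v i) ⬝ᵥ v i = 1 := by
    intro i
    have h := orthonormal_iff_ite.mp b.orthonormal i i
    rw [if_pos rfl] at h
    rw [← h, EuclideanSpace.inner_eq_star_dotProduct, dotProduct_comm]
  set y : Fin d → ℂ := fun i => star (v i) ⬝ᵥ x with hydef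
  set p : Fin d → ℝ := fun i => Complex.normSq (y i) with hpdef
  -- Parseval
  have hpsum : ∑ i, p i = 1 := by
    have h := b.sum_inner_mul_inner ((WithLp.equiv 2 _).symm x) ((WithLp.equiv 2 _).symm x)
    have h2 : ∀ i, (inner ℂ (b i) ((WithLp.equiv 2 (Fin d → ℂ)).symm x) : ℂ) = y i := fun i => by
      rw [EuclideanSpace.inner_eq_star_dotProduct, dotProduct_comm]; rfl
    have h3 : ∀ i, (inner ℂ ((WithLp.equiv 2 (Fin d → ℂ)).symm x) (b i) : ℂ) =
        (starRingEnd ℂ) (y i) := by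
      intro i
      rw [← inner_conj_symm, h2]
    rw [show inner ℂ ((WithLp.equiv 2 (Fin d → ℂ)).symm x) ((WithLp.equiv 2 (Fin d → ℂ)).symm x) =
        star x ⬝ᵥ x from by rw [dotProduct_comm]; rfl, hx] at h
    have h4 : ((∑ i, p i : ℝ) : ℂ) = 1 := by
      rw [← h]
      push_cast
      apply Finset.sum_congr rfl
      intro i _
      rw [h2, h3, hpdef]
      simp [Complex.normSq_eq_conj_mul_self]
    exact_mod_cast h4
  have hppos : ∀ i, 0 ≤ p i := fun i => Complex.normSq_nonneg _
  have hple : ∀ i, p i ≤ 1 := by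
    intro i
    rw [← hpsum]
    exact Finset.single_le_sum (fun j _ => hppos j) (Finset.mem_univ i)
  -- representation of μ as quadratic form
  have hμq : ∀ i, (μ i : ℂ) = star (v i) ⬝ᵥ M *ᵥ v i := by
    intro i
    rw [hMv i, dotProduct_smul, hv1 i, smul_eq_mul, mul_one]
  -- expansion: star v A v = μ + t (1 - p)
  set q : Fin d → ℝ := fun i => μ i + t * (1 - p i) with hqdef
  have hyconj : ∀ i, star x ⬝ᵥ v i = (starRingEnd ℂ) (y i) := by
    intro i
    rw [Matrix.star_dotProduct x (v i)]
    rfl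
  have hq : ∀ i, star (v i) ⬝ᵥ A *ᵥ v i = (q i : ℂ) := by
    intro i
    have h := hμq i
    rw [hMdef, qf_expand] at h
    have h2 : (star (v i) ⬝ᵥ x) * (star x ⬝ᵥ v i) = (p i : ℂ) := by
      rw [hyconj i]
      have : star (v i) ⬝ᵥ x = y i := rfl
      rw [this, hpdef]
      simp [Complex.mul_conj]
    rw [h2, hv1 i] at h
    rw [hqdef]
    push_cast
    linear_combination -h
  -- ∑ μ p = c and qf real
  set c : ℝ := (qf A x).re with hcdef
  have hxMx : star x ⬝ᵥ M *ᵥ x = qf A x := by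
    rw [hMdef, qf_expand, hx]
    simp [qf]
  set U : Matrix (Fin d) (Fin d) ℂ := (hM.eigenvectorUnitary : Matrix (Fin d) (Fin d) ℂ)
    with hUdef
  have hyU : star U *ᵥ x = y := by
    ext i
    rw [hydef]
    simp only [Matrix.mulVec, dotProduct, Matrix.star_apply,
      Matrix.IsHermitian.eigenvectorUnitary_apply]
    rfl
  have hsum_μp : (qf A x) = ((∑ i, μ i * p i : ℝ) : ℂ) := by
    rw [← hxMx]
    conv_lhs => rw [hM.spectral_theorem, Unitary.conjStarAlgAut_apply]
    rw [← Matrix.mulVec_mulVec, ← Matrix.mulVec_mulVec, hyU,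
      Matrix.dotProduct_mulVec (star x) U]
    have hstary : star x ᵥ* U = star y := by
      rw [← hyU, Matrix.star_mulVec, Matrix.star_eq_conjTranspose,
        Matrix.conjTranspose_conjTranspose]
    rw [hstary]
    push_cast
    simp only [dotProduct, Matrix.mulVec_diagonal]
    apply Finset.sum_congr rfl
    intro i _
    rw [hpdef]
    simp only [Pi.star_apply, Function.comp_apply]
    have : (RCLike.ofReal (μ i) : ℂ) = ((μ i : ℝ) : ℂ) := rfl
    rw [this, Complex.normSq_eq_conj_mul_self]
    push_cast
    simp only [Complex.star_def]
    ring
  have hcreal : qf A x = (c : ℂ) := by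
    rw [hsum_μp]; norm_num [hcdef, hsum_μp]
  have hc_eq : c = ∑ i, μ i * p i := by
    have := hcreal.symm.trans hsum_μp
    exact_mod_cast this
  refine ⟨hcreal, ?_, ?_⟩
  · -- lower bound
    haveI : NeZero d := ⟨by omega⟩
    obtain ⟨i0, -, hmax⟩ := Finset.exists_max_image Finset.univ μ
      (Finset.univ_nonempty (α := Fin d))
    have hcle : c ≤ μ i0 := by
      rw [hc_eq]
      calc ∑ i, μ i * p i ≤ ∑ i, μ i0 * p i :=
            Finset.sum_le_sum fun i _ =>
              mul_le_mul_of_nonneg_right (hmax i (Finset.mem_univ i)) (hppos i)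
        _ = μ i0 * ∑ i, p i := by rw [Finset.mul_sum]
        _ = μ i0 := by rw [hpsum, mul_one]
    calc Real.exp c ≤ Real.exp (μ i0) := Real.exp_le_exp.mpr hcle
      _ ≤ ∑ i, Real.exp (μ i) :=
          Finset.single_le_sum (fun i _ => (Real.exp_pos _).le) (Finset.mem_univ i0)
  · -- upper bound
    set a : ℝ := ∑ j, ∑ k, ‖A j k‖ with hadef
    have ha : 0 ≤ a := by positivity
    have hx1 : star x ⬝ᵥ x = ((1 : ℝ) : ℂ) := by rw [hx]; norm_num
    have hxe : ∀ j, ‖x j‖ ≤ 1 := by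
      intro j
      have h := entry_bound x 1 hx1 j
      rwa [Real.sqrt_one] at h
    have hcabs : |c| ≤ a := by
      have h1 : ‖qf A x‖ ≤ a * 1 * 1 :=
        bound_qf A x x 1 1 zero_le_one zero_le_one hxe hxe
      have h2 : |c| ≤ ‖qf A x‖ := Complex.abs_re_le_norm _
      calc |c| ≤ a * 1 * 1 := h2.trans h1
        _ = a := by ring
    have hq_le : ∀ i, q i ≤ c + (4 * a) * Real.sqrt (1 - p i) := by
      intro i
      set s : ℝ := 1 - p i with hsdef
      have hs0 : 0 ≤ s := by have := hple i; simp only [hsdef]; linarith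
      have hs1 : s ≤ 1 := by have := hppos i; simp only [hsdef]; linarith
      set α : ℂ := (starRingEnd ℂ) (y i) with hαdef
      set w : Fin d → ℂ := v i - α • x with hwdef
      have hvw : v i = α • x + w := by rw [hwdef]; abel
      have hstarvx : star (v i) ⬝ᵥ x = y i := rfl
      have hαα : (starRingEnd ℂ) α * α = ((p i : ℝ) : ℂ) := by
        rw [hαdef, Complex.conj_conj, Complex.mul_conj]
      have hw_norm : star w ⬝ᵥ w = ((s : ℝ) : ℂ) := by
        rw [hwdef]
        have hsw : star (v i - α • x) = star (v i) - (starRingEnd ℂ) α • star x := by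
          ext j
          simp [Complex.star_def, mul_comm]
        rw [hsw, sub_dotProduct, dotProduct_sub, dotProduct_sub,
          smul_dotProduct, smul_dotProduct, dotProduct_smul,
          dotProduct_smul, hv1 i, hstarvx, hyconj i, hx]
        have hyc := Complex.mul_conj (y i)
        simp only [smul_eq_mul, hαdef, Complex.conj_conj, hsdef, hpdef]
        push_cast
        linear_combination -hyc
      have hwe := entry_bound w s hw_norm
      have hα_abs : ‖α‖ ≤ 1 := by
        rw [hαdef, Complex.norm_conj, Complex.norm_def]
        exact Real.sqrt_le_one.mpr (hple i)
      have hss : Real.sqrt s * Real.sqrt s = s := Real.mul_self_sqrt hs0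
      have hsle : s ≤ Real.sqrt s := by
        nlinarith [Real.sqrt_nonneg s, Real.sqrt_le_one.mpr hs1]
      have hT2 : ‖star x ⬝ᵥ A *ᵥ w‖ ≤ a * 1 * Real.sqrt s :=
        bound_qf A x w 1 (Real.sqrt s) zero_le_one (Real.sqrt_nonneg s) hxe hwe
      have hT3 : ‖star w ⬝ᵥ A *ᵥ x‖ ≤ a * Real.sqrt s * 1 :=
        bound_qf A w x (Real.sqrt s) 1 (Real.sqrt_nonneg s) zero_le_one hwe hxe
      have hT4 : ‖star w ⬝ᵥ A *ᵥ w‖ ≤ a * Real.sqrt s * Real.sqrt s :=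
        bound_qf A w w (Real.sqrt s) (Real.sqrt s) (Real.sqrt_nonneg s)
          (Real.sqrt_nonneg s) hwe hwe
      have hexp : ((q i : ℝ) : ℂ) = ((p i : ℝ) : ℂ) * (c : ℂ) +
          (starRingEnd ℂ) α * (star x ⬝ᵥ A *ᵥ w) + α * (star w ⬝ᵥ A *ᵥ x) +
          star w ⬝ᵥ A *ᵥ w := by
        rw [← hq i]
        have hsadd : star (α • x + w) = (starRingEnd ℂ) α • star x + star w := by
          ext j
          simp [Complex.star_def, mul_comm]
        conv_lhs => rw [hvw, hsadd, Matrix.mulVec_add, Matrix.mulVec_smul]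
        simp only [add_dotProduct, dotProduct_add, smul_dotProduct,
          dotProduct_smul, smul_eq_mul]
        have hqfc : star x ⬝ᵥ A *ᵥ x = (c : ℂ) := by rw [← hcreal]; rfl
        rw [hqfc]
        linear_combination ((c : ℝ) : ℂ) * hαα
      have hre : q i = p i * c + ((starRingEnd ℂ) α * (star x ⬝ᵥ A *ᵥ w) +
          α * (star w ⬝ᵥ A *ᵥ x) + star w ⬝ᵥ A *ᵥ w).re := by
        have h0 := congrArg Complex.re hexp
        rw [show ((p i : ℝ) : ℂ) * ((c : ℝ) : ℂ) +
            (starRingEnd ℂ) α * (star x ⬝ᵥ A *ᵥ w) + α * (star w ⬝ᵥ A *ᵥ x) +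
            star w ⬝ᵥ A *ᵥ w =
            ((p i * c : ℝ) : ℂ) + ((starRingEnd ℂ) α * (star x ⬝ᵥ A *ᵥ w) +
            α * (star w ⬝ᵥ A *ᵥ x) + star w ⬝ᵥ A *ᵥ w) from by push_cast; ring] at h0
        simpa using h0
      have habs : ((starRingEnd ℂ) α * (star x ⬝ᵥ A *ᵥ w) +
          α * (star w ⬝ᵥ A *ᵥ x) + star w ⬝ᵥ A *ᵥ w).re ≤ 3 * (a * Real.sqrt s) := by
        have e1 : ‖(starRingEnd ℂ) α * (star x ⬝ᵥ A *ᵥ w)‖ ≤ 1 * (a * 1 * Real.sqrt s) := by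
          rw [norm_mul, Complex.norm_conj]
          exact mul_le_mul hα_abs hT2 (norm_nonneg _) zero_le_one
        have e2 : ‖α * (star w ⬝ᵥ A *ᵥ x)‖ ≤ 1 * (a * Real.sqrt s * 1) := by
          rw [norm_mul]
          exact mul_le_mul hα_abs hT3 (norm_nonneg _) zero_le_one
        calc ((starRingEnd ℂ) α * (star x ⬝ᵥ A *ᵥ w) +
            α * (star w ⬝ᵥ A *ᵥ x) + star w ⬝ᵥ A *ᵥ w).re
            ≤ ‖_‖ := Complex.re_le_norm _
          _ ≤ ‖(starRingEnd ℂ) α * (star x ⬝ᵥ A *ᵥ w) + α * (star w ⬝ᵥ A *ᵥ x)‖ +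
              ‖star w ⬝ᵥ A *ᵥ w‖ := norm_add_le _ _
          _ ≤ (‖(starRingEnd ℂ) α * (star x ⬝ᵥ A *ᵥ w)‖ +
              ‖α * (star w ⬝ᵥ A *ᵥ x)‖) +
              ‖star w ⬝ᵥ A *ᵥ w‖ := by
                exact add_le_add_left (norm_add_le _ _) _
          _ ≤ 3 * (a * Real.sqrt s) := by nlinarith [hT4, hss, hsle, ha, Real.sqrt_nonneg s]
      have hpc : p i * c ≤ c + Real.sqrt s * a := by
        have h1 : p i * c = c - s * c := by rw [hsdef]; ring
        have h2 : -c ≤ |c| := neg_le_abs c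
        have h4 : s * (-c) ≤ s * a := mul_le_mul_of_nonneg_left (h2.trans hcabs) hs0
        have h5 : s * a ≤ Real.sqrt s * a := mul_le_mul_of_nonneg_right hsle ha
        rw [h1]
        nlinarith [h4, h5]
      rw [hre]
      nlinarith [habs, hpc, Real.sqrt_nonneg s]
    have hterm : ∀ i, Real.exp (μ i) ≤ Real.exp (c + (4*a)^2/(2*t)) *
        (p i + (1 - p i) * Real.exp (-t/2)) := by
      intro i
      have hs0 : 0 ≤ 1 - p i := by have := hple i; linarith
      have hμi : μ i = q i - t * (1 - p i) := by simp only [hqdef]; ring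
      have hss : Real.sqrt (1 - p i) * Real.sqrt (1 - p i) = 1 - p i := Real.mul_self_sqrt hs0
      have h2t : (0:ℝ) < 2 * t := by linarith
      have hkey : (4*a) * Real.sqrt (1 - p i) - (t/2) * (1 - p i) ≤ (4*a)^2/(2*t) := by
        have haux : ∀ u : ℝ, (4*a) * u - (t/2) * (u*u) ≤ (4*a)^2/(2*t) := by
          intro u
          rw [le_div_iff₀ h2t]
          nlinarith [sq_nonneg (t*u - 4*a)]
        have h6 := haux (Real.sqrt (1 - p i))
        rwa [hss] at h6
      have h1 : μ i ≤ c + (4*a)^2/(2*t) - (t/2)*(1 - p i) := by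
        have h3 := hq_le i
        linarith [hkey, hμi, h3]
      have h2 : Real.exp (-(t/2) * (1 - p i)) ≤ p i + (1 - p i) * Real.exp (-t/2) := by
        have hcx := convexOn_exp.2 (Set.mem_univ (0:ℝ)) (Set.mem_univ (-t/2))
          (hppos i) hs0 (by ring : p i + (1 - p i) = 1)
        simp only [smul_eq_mul, mul_zero, zero_add, Real.exp_zero, mul_one] at hcx
        have heq : -(t/2) * (1 - p i) = (1 - p i) * (-t/2) := by ring
        rw [heq]
        exact hcx
      calc Real.exp (μ i) ≤ Real.exp (c + (4*a)^2/(2*t) - (t/2)*(1 - p i)) :=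
            Real.exp_le_exp.mpr h1
        _ = Real.exp (c + (4*a)^2/(2*t)) * Real.exp (-(t/2)*(1 - p i)) := by
            rw [← Real.exp_add]; ring_nf
        _ ≤ _ := mul_le_mul_of_nonneg_left h2 (Real.exp_pos _).le
    calc ∑ i, Real.exp (μ i)
        ≤ ∑ i, Real.exp (c + (4*a)^2/(2*t)) * (p i + (1 - p i) * Real.exp (-t/2)) :=
          Finset.sum_le_sum fun i _ => hterm i
      _ = Real.exp (c + (4*a)^2/(2*t)) * (∑ i, (p i + (1 - p i) * Real.exp (-t/2))) :=
          (Finset.mul_sum _ _ _).symm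
      _ = Real.exp (c + (4*a)^2/(2*t)) * (1 + ((d:ℝ) - 1) * Real.exp (-t/2)) := by
          congr 1
          have hsub : ∑ i, (1 - p i) = (d:ℝ) - 1 := by
            rw [Finset.sum_sub_distrib, hpsum, Finset.sum_const, Finset.card_univ,
              Fintype.card_fin]
            simp
          rw [Finset.sum_add_distrib, hpsum, ← Finset.sum_mul, hsub]

/-- for Hermitian `A` and a unit vector `x` with `P = x ⊗ x`,
`tr (exp (A + t (P - I))) → exp ⟨Ax, x⟩` as `t → ∞`. -/
theorem trace_exp_tendsto {d : ℕ} (hd : 2 ≤ d) (A : Matrix (Fin d) (Fin d) ℂ)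
    (hA : A.IsHermitian) (x : Fin d → ℂ) (hx : star x ⬝ᵥ x = 1) :
    Tendsto (fun t : ℝ =>
        (mexp (A + (t : ℂ) • (rankOneProj x - 1))).trace)
      atTop (nhds (Complex.exp (qf A x))) := by
  have hc : qf A x = (((qf A x).re : ℝ) : ℂ) := (key hd A hA x hx 1 one_pos).1
  set c : ℝ := (qf A x).re with hcdef
  set S : ℝ → ℝ := fun t => ∑ i, Real.exp ((herm_M hA x t).eigenvalues i) with hS
  have htr : ∀ t : ℝ, (mexp (A + (t : ℂ) • (rankOneProj x - 1))).trace = ((S t : ℝ) : ℂ) := by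
    intro t
    rw [trace_mexp (herm_M hA x t)]
    simp only [hS]
    push_cast
    rfl
  set K : ℝ := 4 * (∑ j, ∑ k, ‖A j k‖) with hK
  have hU : Tendsto (fun t : ℝ => Real.exp (c + K^2 / (2*t)) *
      (1 + ((d:ℝ) - 1) * Real.exp (-t/2))) atTop (nhds (Real.exp c)) := by
    have h1 : Tendsto (fun t : ℝ => K^2 / (2*t)) atTop (nhds 0) := by
      apply Tendsto.div_atTop tendsto_const_nhds
      exact Tendsto.const_mul_atTop two_pos tendsto_id
    have h2 : Tendsto (fun t : ℝ => Real.exp (c + K^2 / (2*t))) atTop (nhds (Real.exp c)) := by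
      have := (Real.continuous_exp.tendsto (c + 0)).comp (tendsto_const_nhds.add h1)
      simpa [Function.comp_def] using this
    have h3 : Tendsto (fun t : ℝ => Real.exp (-t/2)) atTop (nhds 0) := by
      have h4 : Tendsto (fun t : ℝ => t/2) atTop atTop := tendsto_id.atTop_div_const two_pos
      have h6 := (Real.tendsto_exp_neg_atTop_nhds_zero).comp h4
      exact h6.congr fun t => by rw [Function.comp_apply, neg_div]
    have h5 : Tendsto (fun t : ℝ => 1 + ((d:ℝ) - 1) * Real.exp (-t/2)) atTop (nhds 1) := by
      have h7 : Tendsto (fun t : ℝ => ((d:ℝ) - 1) * Real.exp (-t/2)) atTop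
          (nhds (((d:ℝ) - 1) * 0)) := tendsto_const_nhds.mul h3
      have h8 := (tendsto_const_nhds (x := (1:ℝ)) (f := atTop)).add h7
      simpa using h8
    have := h2.mul h5
    simpa using this
  have hreal : Tendsto S atTop (nhds (Real.exp c)) := by
    apply tendsto_of_tendsto_of_tendsto_of_le_of_le' tendsto_const_nhds hU
    · exact (eventually_gt_atTop 0).mono fun t ht => (key hd A hA x hx t ht).2.1
    · exact (eventually_gt_atTop 0).mono fun t ht => (key hd A hA x hx t ht).2.2
  have hfin : Tendsto (fun t : ℝ => ((S t : ℝ) : ℂ)) atTop (nhds ((Real.exp c : ℝ) : ℂ)) :=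
    (Complex.continuous_ofReal.tendsto _).comp hreal
  rw [show Complex.exp (qf A x) = ((Real.exp c : ℝ) : ℂ) from by
    rw [hc, Complex.ofReal_exp]]
  exact Tendsto.congr (fun t => (htr t).symm) hfin
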